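/- Let R ∈ ℝ^{n×n}, let (x*,y*) be a Nash equilibrium of the associated zero-sum game, let (x,y) be a fully mixed profile, let x̂ and ŷ be probability vectors, and let η ≥ 0. Define the multiplicative update x'_i = x_i e^{η(Rŷ)_i} / Σ_j x_j e^{η(Rŷ)_j} and y'_j = y_j e^{−η(Rᵀx̂)_j} / Σ_i y_i e^{−η(Rᵀx̂)_i}. Then D_KL((x*,y*)||(x',y')) − D_KL((x*,y*)||(x,y)) ≤ ln(Σ_i x_i e^{η((Rŷ)_i − xᵀRy)}) + ln(Σ_j y_j e^{−η((Rᵀx̂)_j − xᵀRy)}). -/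

import Mathlib

open Finset Real Filter

/-- A probability vector (mixed strategy) on `Fin n`. -/
def IsProbVec {n : ℕ} (x : Fin n → ℝ) : Prop := (∀ i, 0 ≤ x i) ∧ ∑ i, x i = 1

/-- A fully mixed strategy: all coordinates strictly positive. -/
def FullyMixed {n : ℕ} (x : Fin n → ℝ) : Prop := ∀ i, 0 < x i

/-- Expected payoff of the row player, `xᵀ R y`. -/
def payoff {n : ℕ} (R : Matrix (Fin n) (Fin n) ℝ) (x y : Fin n → ℝ) : ℝ :=
  ∑ i, ∑ j, x i * R i j * y j

/-- `e_iᵀ R y`, the payoff of pure row strategy `i` against `y`. -/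
def rowPayoff {n : ℕ} (R : Matrix (Fin n) (Fin n) ℝ) (y : Fin n → ℝ) (i : Fin n) : ℝ :=
  ∑ j, R i j * y j

/-- `xᵀ R e_j`, the (row player's) payoff when the column player plays pure strategy `j`. -/
def colPayoff {n : ℕ} (R : Matrix (Fin n) (Fin n) ℝ) (x : Fin n → ℝ) (j : Fin n) : ℝ :=
  ∑ i, x i * R i j

/-- `(x, y)` is a Nash equilibrium of the zero-sum game with payoff matrix `R`. -/
def IsNash {n : ℕ} (R : Matrix (Fin n) (Fin n) ℝ) (x y : Fin n → ℝ) : Prop :=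
  IsProbVec x ∧ IsProbVec y ∧ (∀ i, rowPayoff R y i ≤ payoff R x y) ∧
    (∀ j, payoff R x y ≤ colPayoff R x j)

/-- `(x, y)` is an `ε`-Nash equilibrium. -/
def IsEpsNash {n : ℕ} (R : Matrix (Fin n) (Fin n) ℝ) (x y : Fin n → ℝ) (ε : ℝ) : Prop :=
  (∀ i, rowPayoff R y i ≤ payoff R x y + ε) ∧ (∀ j, payoff R x y - ε ≤ colPayoff R x j)

/-- Intermediate (IBR) strategy of the row player:
`x̂ᵢ = xᵢ e^{ξ (Ry)ᵢ} / ∑ⱼ xⱼ e^{ξ (Ry)ⱼ}`. -/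
noncomputable def brX {n : ℕ} (ξ : ℝ) (R : Matrix (Fin n) (Fin n) ℝ) (x y : Fin n → ℝ) :
    Fin n → ℝ :=
  fun i => x i * Real.exp (ξ * rowPayoff R y i) / ∑ j, x j * Real.exp (ξ * rowPayoff R y j)

/-- Intermediate (IBR) strategy of the column player:
`ŷⱼ = yⱼ e^{-ξ (Rᵀx)ⱼ} / ∑ₖ yₖ e^{-ξ (Rᵀx)ₖ}`. -/
noncomputable def brY {n : ℕ} (ξ : ℝ) (R : Matrix (Fin n) (Fin n) ℝ) (x y : Fin n → ℝ) :
    Fin n → ℝ :=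
  fun j => y j * Real.exp (-(ξ * colPayoff R x j)) / ∑ k, y k * Real.exp (-(ξ * colPayoff R x k))

/-- Multiplicative-weights update of the row player against the (intermediate) strategy `yh`. -/
noncomputable def mwuX {n : ℕ} (η : ℝ) (R : Matrix (Fin n) (Fin n) ℝ) (x yh : Fin n → ℝ) :
    Fin n → ℝ :=
  fun i => x i * Real.exp (η * rowPayoff R yh i) / ∑ j, x j * Real.exp (η * rowPayoff R yh j)

/-- Multiplicative-weights update of the column player against the (intermediate) strategy `xh`. -/
noncomputable def mwuY {n : ℕ} (η : ℝ) (R : Matrix (Fin n) (Fin n) ℝ) (y xh : Fin n → ℝ) :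
    Fin n → ℝ :=
  fun j => y j * Real.exp (-(η * colPayoff R xh j)) / ∑ k, y k * Real.exp (-(η * colPayoff R xh k))

/-- One full step of the FLBR-MWU dynamics with update rate `η` and intermediate rate `ξ`. -/
noncomputable def flbrStep {n : ℕ} (η ξ : ℝ) (R : Matrix (Fin n) (Fin n) ℝ)
    (p : (Fin n → ℝ) × (Fin n → ℝ)) : (Fin n → ℝ) × (Fin n → ℝ) :=
  (mwuX η R p.1 (brY ξ R p.1 p.2), mwuY η R p.2 (brX ξ R p.1 p.2))

/-- Kullback–Leibler divergence `∑ᵢ xsᵢ ln(xsᵢ / xᵢ)` (with the convention `0 · ln 0 = 0`). -/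
noncomputable def klDiv {n : ℕ} (xs x : Fin n → ℝ) : ℝ := ∑ i, xs i * Real.log (xs i / x i)

/-- KL divergence of the profile `(x, y)` from `(xs, ys)`. -/
noncomputable def klProfile {n : ℕ} (xs ys x y : Fin n → ℝ) : ℝ := klDiv xs x + klDiv ys y

lemma kl_update_diff {n : ℕ} (xs x w : Fin n → ℝ) (hn : (Finset.univ : Finset (Fin n)).Nonempty)
    (hxs : IsProbVec xs) (hxm : FullyMixed x) (hw : ∀ i, 0 < w i) :
    klDiv xs (fun i => x i * w i / ∑ j, x j * w j) - klDiv xs x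
      = Real.log (∑ j, x j * w j) - ∑ i, xs i * Real.log (w i) := by
  have hZ : 0 < ∑ j, x j * w j :=
    Finset.sum_pos (fun j _ => mul_pos (hxm j) (hw j)) hn
  have key : ∀ i, xs i * Real.log (xs i / (x i * w i / ∑ j, x j * w j))
      - xs i * Real.log (xs i / x i)
      = xs i * Real.log (∑ j, x j * w j) - xs i * Real.log (w i) := by
    intro i
    rcases eq_or_lt_of_le (hxs.1 i) with h | h
    · simp [← h]
    · rw [Real.log_div (ne_of_gt h) (ne_of_gt (div_pos (mul_pos (hxm i) (hw i)) hZ)),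
        Real.log_div (ne_of_gt h) (ne_of_gt (hxm i)),
        Real.log_div (ne_of_gt (mul_pos (hxm i) (hw i))) (ne_of_gt hZ),
        Real.log_mul (ne_of_gt (hxm i)) (ne_of_gt (hw i))]
      ring
  unfold klDiv
  rw [← Finset.sum_sub_distrib]
  rw [Finset.sum_congr rfl (fun i _ => key i), Finset.sum_sub_distrib,
    ← Finset.sum_mul, hxs.2, one_mul]

/-- If `(xs, ys)` is a Nash equilibrium and `η ≥ 0`, the change of KL
divergence under one multiplicative update is bounded by the two centered log-sum-exp terms. -/
theorem mwu_kl_diff_le_logSumExp {n : ℕ} (R : Matrix (Fin n) (Fin n) ℝ)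
    (xs ys : Fin n → ℝ) (hNash : IsNash R xs ys)
    (x y : Fin n → ℝ) (hx : IsProbVec x) (hy : IsProbVec y)
    (hxm : FullyMixed x) (hym : FullyMixed y)
    (xh yh : Fin n → ℝ) (hxh : IsProbVec xh) (hyh : IsProbVec yh)
    (η : ℝ) (hη : 0 ≤ η) :
    klProfile xs ys (mwuX η R x yh) (mwuY η R y xh) - klProfile xs ys x y
      ≤ Real.log (∑ i, x i * Real.exp (η * (rowPayoff R yh i - payoff R x y)))
        + Real.log (∑ j, y j * Real.exp (-(η * (colPayoff R xh j - payoff R x y)))) := by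
  obtain ⟨⟨hxs0, hxs1⟩, ⟨hys0, hys1⟩, hN1, hN2⟩ := hNash
  have hn : (Finset.univ : Finset (Fin n)).Nonempty :=
    Finset.nonempty_of_sum_ne_zero (by rw [hx.2]; norm_num)
  set c := payoff R x y with hc
  set Zx := ∑ j, x j * Real.exp (η * rowPayoff R yh j) with hZx
  set Zy := ∑ k, y k * Real.exp (-(η * colPayoff R xh k)) with hZy
  have hZxpos : 0 < Zx := Finset.sum_pos (fun j _ => mul_pos (hxm j) (Real.exp_pos _)) hn
  have hZypos : 0 < Zy := Finset.sum_pos (fun k _ => mul_pos (hym k) (Real.exp_pos _)) hn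
  have hdx : klDiv xs (mwuX η R x yh) - klDiv xs x
      = Real.log Zx - ∑ i, xs i * (η * rowPayoff R yh i) := by
    have := kl_update_diff xs x (fun i => Real.exp (η * rowPayoff R yh i)) hn
      ⟨hxs0, hxs1⟩ hxm (fun i => Real.exp_pos _)
    simp only [Real.log_exp] at this; rw [hZx]; exact this
  have hdy : klDiv ys (mwuY η R y xh) - klDiv ys y
      = Real.log Zy + ∑ j, ys j * (η * colPayoff R xh j) := by
    have := kl_update_diff ys y (fun j => Real.exp (-(η * colPayoff R xh j))) hn
      ⟨hys0, hys1⟩ hym (fun j => Real.exp_pos _)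
    simp only [Real.log_exp] at this
    rw [show klDiv ys (mwuY η R y xh) = klDiv ys
        (fun j => y j * Real.exp (-(η * colPayoff R xh j))
          / ∑ k, y k * Real.exp (-(η * colPayoff R xh k))) from rfl, this]
    rw [← hZy]
    simp [mul_neg, Finset.sum_neg_distrib, sub_neg_eq_add]
  have hRx : Real.log (∑ i, x i * Real.exp (η * (rowPayoff R yh i - c)))
      = Real.log Zx - η * c := by
    have : (∑ i, x i * Real.exp (η * (rowPayoff R yh i - c)))
        = Zx * Real.exp (-(η * c)) := by
      rw [hZx, Finset.sum_mul]
      refine Finset.sum_congr rfl fun i _ => ?_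
      rw [show η * (rowPayoff R yh i - c) = η * rowPayoff R yh i + -(η * c) by ring,
        Real.exp_add]
      ring
    rw [this, Real.log_mul (ne_of_gt hZxpos) (Real.exp_ne_zero _), Real.log_exp]
    ring
  have hRy : Real.log (∑ j, y j * Real.exp (-(η * (colPayoff R xh j - c))))
      = Real.log Zy + η * c := by
    have : (∑ j, y j * Real.exp (-(η * (colPayoff R xh j - c))))
        = Zy * Real.exp (η * c) := by
      rw [hZy, Finset.sum_mul]
      refine Finset.sum_congr rfl fun j _ => ?_
      rw [show -(η * (colPayoff R xh j - c)) = -(η * colPayoff R xh j) + η * c by ring,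
        Real.exp_add]
      ring
    rw [this, Real.log_mul (ne_of_gt hZypos) (Real.exp_ne_zero _), Real.log_exp]
  have e1 : ∑ i, xs i * rowPayoff R yh i = ∑ j, colPayoff R xs j * yh j := by
    simp only [rowPayoff, colPayoff, Finset.mul_sum, Finset.sum_mul]
    rw [Finset.sum_comm]
    exact Finset.sum_congr rfl fun j _ => Finset.sum_congr rfl fun i _ => by ring
  have e2 : ∑ j, ys j * colPayoff R xh j = ∑ i, xh i * rowPayoff R ys i := by
    simp only [rowPayoff, colPayoff, Finset.mul_sum, Finset.sum_mul]
    rw [Finset.sum_comm]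
    exact Finset.sum_congr rfl fun i _ => Finset.sum_congr rfl fun j _ => by ring
  have h1 : payoff R xs ys ≤ ∑ i, xs i * rowPayoff R yh i := by
    rw [e1]
    calc payoff R xs ys = ∑ j, payoff R xs ys * yh j := by
          rw [← Finset.mul_sum, hyh.2, mul_one]
      _ ≤ ∑ j, colPayoff R xs j * yh j :=
          Finset.sum_le_sum fun j _ => mul_le_mul_of_nonneg_right (hN2 j) (hyh.1 j)
  have h2 : ∑ j, ys j * colPayoff R xh j ≤ payoff R xs ys := by
    rw [e2]
    calc ∑ i, xh i * rowPayoff R ys i ≤ ∑ i, xh i * payoff R xs ys :=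
          Finset.sum_le_sum fun i _ => mul_le_mul_of_nonneg_left (hN1 i) (hxh.1 i)
      _ = payoff R xs ys := by rw [← Finset.sum_mul, hxh.2, one_mul]
  have hm1 : ∑ i, xs i * (η * rowPayoff R yh i) = η * ∑ i, xs i * rowPayoff R yh i := by
    rw [Finset.mul_sum]; exact Finset.sum_congr rfl fun i _ => by ring
  have hm2 : ∑ j, ys j * (η * colPayoff R xh j) = η * ∑ j, ys j * colPayoff R xh j := by
    rw [Finset.mul_sum]; exact Finset.sum_congr rfl fun j _ => by ring
  have hkey : η * ∑ j, ys j * colPayoff R xh j ≤ η * ∑ i, xs i * rowPayoff R yh i :=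
    mul_le_mul_of_nonneg_left (le_trans h2 h1) hη
  have hLHS : klProfile xs ys (mwuX η R x yh) (mwuY η R y xh) - klProfile xs ys x y
      = (klDiv xs (mwuX η R x yh) - klDiv xs x) + (klDiv ys (mwuY η R y xh) - klDiv ys y) := by
    unfold klProfile; ring
  rw [hLHS, hdx, hdy, hRx, hRy, hm1, hm2]
  linarith
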